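/- Testing between converging hypotheses: consider a binary hypothesis test with uniform prior H ∼ Bernoulli(1/2), where given H = 0 the samples X₁ⁿ are i.i.d. P_X and given H = 1 they are i.i.d. Q_X, on a finite alphabet 𝒳. If ‖P_X − Q_X‖₂ ≥ n^{−(1/2 − εₙ)} for some εₙ ∈ (0, 1/2), then the minimum (maximum-likelihood) probability of error satisfies P_ML ≤ |𝒳| / (2|𝒳| + 2n^{2εₙ}). -/

import Mathlib

set_option maxHeartbeats 1000000

open Real

/-- `P` is a probability distribution on a finite set. -/
def IsProb {X : Type*} [Fintype X] (P : X → ℝ) : Prop :=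
  (∀ x, 0 ≤ P x) ∧ ∑ x, P x = 1

/-- The n-fold product (i.i.d.) distribution. -/
def prodD {X : Type*} (P : X → ℝ) (n : ℕ) : (Fin n → X) → ℝ :=
  fun xs => ∏ i, P (xs i)

lemma sum_pi_succ {X : Type*} [Fintype X] {n : ℕ} (F : (Fin (n+1) → X) → ℝ) :
    ∑ xs : Fin (n+1) → X, F xs = ∑ x : X, ∑ xs : Fin n → X, F (Fin.cons x xs) := by
  rw [← (Fin.consEquiv (fun _ : Fin (n+1) => X)).sum_comp F, Fintype.sum_prod_type]
  simp [Fin.consEquiv]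

lemma prodD_cons {X : Type*} (P : X → ℝ) {n : ℕ} (x : X) (xs : Fin n → X) :
    prodD P (n+1) (Fin.cons x xs) = P x * prodD P n xs := by
  simp [prodD, Fin.prod_univ_succ]

lemma sum_prodD {X : Type*} [Fintype X] (P : X → ℝ) (hP : ∑ x, P x = 1) :
    ∀ n : ℕ, ∑ xs : Fin n → X, prodD P n xs = 1 := by
  intro n
  induction n with
  | zero => simp [prodD]
  | succ n ih =>
    rw [sum_pi_succ]
    simp only [prodD_cons, ← Finset.mul_sum, ih, mul_one]
    exact hP

lemma sum_prodD_lin {X : Type*} [Fintype X] (P : X → ℝ) (hP : ∑ x, P x = 1) (u : X → ℝ) :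
    ∀ n : ℕ, ∑ xs : Fin n → X, prodD P n xs * (∑ i, u (xs i))
      = n * ∑ x, P x * u x := by
  intro n
  induction n with
  | zero => simp
  | succ n ih =>
    rw [sum_pi_succ]
    have : ∀ (x : X) (xs : Fin n → X),
        prodD P (n+1) (Fin.cons x xs) * (∑ i, u ((Fin.cons x xs : Fin (n+1) → X) i))
        = P x * u x * prodD P n xs + P x * (prodD P n xs * ∑ i, u (xs i)) := by
      intro x xs
      rw [prodD_cons, Fin.sum_univ_succ]
      simp only [Fin.cons_zero, Fin.cons_succ]
      ring
    simp only [this, Finset.sum_add_distrib, ← Finset.mul_sum, ih,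
      sum_prodD P hP n, mul_one]
    simp only [← Finset.sum_mul]
    rw [hP]
    push_cast
    ring

lemma sum_prodD_sq {X : Type*} [Fintype X] (P : X → ℝ) (hP : ∑ x, P x = 1) (u : X → ℝ) :
    ∀ n : ℕ, ∑ xs : Fin n → X, prodD P n xs * (∑ i, u (xs i))^2
      = n * (∑ x, P x * u x ^ 2) + (n : ℝ) * ((n : ℝ) - 1) * (∑ x, P x * u x)^2 := by
  intro n
  induction n with
  | zero => simp
  | succ n ih =>
    rw [sum_pi_succ]
    have : ∀ (x : X) (xs : Fin n → X),
        prodD P (n+1) (Fin.cons x xs) * (∑ i, u ((Fin.cons x xs : Fin (n+1) → X) i))^2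
        = P x * u x ^ 2 * prodD P n xs
          + 2 * (P x * u x) * (prodD P n xs * ∑ i, u (xs i))
          + P x * (prodD P n xs * (∑ i, u (xs i))^2) := by
      intro x xs
      rw [prodD_cons, Fin.sum_univ_succ]
      simp only [Fin.cons_zero, Fin.cons_succ]
      ring
    simp only [this, Finset.sum_add_distrib, ← Finset.mul_sum, ih,
      sum_prodD P hP n, mul_one, sum_prodD_lin P hP u n]
    simp only [← Finset.sum_mul]
    rw [hP, ← Finset.mul_sum]
    push_cast
    ring

/-- Numerator identity: `∑ (A-B)(T-θ) = n(μP - μQ)`. -/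
lemma sum_sub_mul_lin {X : Type*} [Fintype X] (P Q : X → ℝ)
    (hP : ∑ x, P x = 1) (hQ : ∑ x, Q x = 1) (u : X → ℝ) (n : ℕ) (θ : ℝ) :
    ∑ xs : Fin n → X, (prodD P n xs - prodD Q n xs) * ((∑ i, u (xs i)) - θ)
      = n * ((∑ x, P x * u x) - (∑ x, Q x * u x)) := by
  have e : ∀ xs : Fin n → X,
      (prodD P n xs - prodD Q n xs) * ((∑ i, u (xs i)) - θ)
      = prodD P n xs * (∑ i, u (xs i)) - prodD Q n xs * (∑ i, u (xs i))
        - θ * prodD P n xs + θ * prodD Q n xs := by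
    intro xs; ring
  simp only [e, Finset.sum_add_distrib, Finset.sum_sub_distrib, ← Finset.mul_sum]
  rw [sum_prodD_lin P hP u n, sum_prodD_lin Q hQ u n, sum_prodD P hP n, sum_prodD Q hQ n]
  ring

/-- Denominator identity: second moment of the centered statistic under `P^n + Q^n`. -/
lemma sum_add_mul_sq {X : Type*} [Fintype X] (P Q : X → ℝ)
    (hP : ∑ x, P x = 1) (hQ : ∑ x, Q x = 1) (u : X → ℝ) (n : ℕ) (θ : ℝ) :
    ∑ xs : Fin n → X, (prodD P n xs + prodD Q n xs) * ((∑ i, u (xs i)) - θ)^2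
      = n * ((∑ x, P x * u x ^ 2) + (∑ x, Q x * u x ^ 2))
        + (n : ℝ) * ((n : ℝ) - 1) * ((∑ x, P x * u x)^2 + (∑ x, Q x * u x)^2)
        - 2 * θ * ((n : ℝ) * ((∑ x, P x * u x) + (∑ x, Q x * u x)))
        + 2 * θ^2 := by
  have e : ∀ xs : Fin n → X,
      (prodD P n xs + prodD Q n xs) * ((∑ i, u (xs i)) - θ)^2
      = prodD P n xs * (∑ i, u (xs i))^2 + prodD Q n xs * (∑ i, u (xs i))^2
        - 2 * θ * (prodD P n xs * (∑ i, u (xs i)))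
        - 2 * θ * (prodD Q n xs * (∑ i, u (xs i)))
        + θ^2 * prodD P n xs + θ^2 * prodD Q n xs := by
    intro xs; ring
  simp only [e, Finset.sum_add_distrib, Finset.sum_sub_distrib, ← Finset.mul_sum]
  rw [sum_prodD_sq P hP u n, sum_prodD_sq Q hQ u n, sum_prodD_lin P hP u n,
    sum_prodD_lin Q hQ u n, sum_prodD P hP n, sum_prodD Q hQ n]
  ring

/-- Testing between converging hypotheses: for a uniform-prior binary hypothesis test
between i.i.d. samples from `P` and from `Q` on a finite alphabet `𝒳`, if
`‖P − Q‖₂ ≥ n^{−(1/2 − ε)}` with `ε ∈ (0, 1/2)`, then the maximum-likelihood probability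
of error `P_ML = (1/2)(1 − ‖P^{⊗n} − Q^{⊗n}‖_TV)` is at most `|𝒳|/(2|𝒳| + 2 n^{2ε})`. -/
theorem testing_between_converging_hypotheses {X : Type*} [Fintype X] {n : ℕ} (hn : 0 < n)
    (P Q : X → ℝ) (hP : IsProb P) (hQ : IsProb Q) (ε : ℝ) (hε0 : 0 < ε) (hε1 : ε < 1 / 2)
    (hdist : (n : ℝ) ^ (-(1 / 2 - ε)) ≤ Real.sqrt (∑ x, (P x - Q x) ^ 2)) :
    (1 / 2) * (1 - (1 / 2) * ∑ xs : Fin n → X, |prodD P n xs - prodD Q n xs|) ≤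
      (Fintype.card X : ℝ) / (2 * Fintype.card X + 2 * (n : ℝ) ^ (2 * ε)) := by
  classical
  obtain ⟨hP0, hP1⟩ := hP
  obtain ⟨hQ0, hQ1⟩ := hQ
  have hn' : (0:ℝ) < n := by exact_mod_cast hn
  set c : ℝ := ∑ x, (P x - Q x) ^ 2 with hc
  set K : ℝ := (Fintype.card X : ℝ) with hK
  set t : ℝ := (n : ℝ) ^ (2 * ε) with htdef
  have hcnn : 0 ≤ c := Finset.sum_nonneg fun x _ => sq_nonneg _
  have hc0 : 0 < c := by
    have h1 : 0 < Real.sqrt c :=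
      lt_of_lt_of_le (Real.rpow_pos_of_pos hn' _) hdist
    exact Real.sqrt_pos.mp h1
  have ht0 : 0 < t := Real.rpow_pos_of_pos hn' _
  -- t ≤ n * c
  have htw : t ≤ (n : ℝ) * c := by
    have h2 : (n:ℝ) ^ (2 * ε - 1) ≤ c := by
      have h3 : ((n:ℝ) ^ (-(1 / 2 - ε)))^2 ≤ (Real.sqrt c)^2 := by
        apply pow_le_pow_left₀ (Real.rpow_nonneg hn'.le _) hdist
      rw [Real.sq_sqrt hcnn] at h3
      calc (n:ℝ) ^ (2 * ε - 1) = (n:ℝ) ^ (-(1 / 2 - ε)) * (n:ℝ) ^ (-(1 / 2 - ε)) := by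
            rw [← Real.rpow_add hn']; ring_nf
        _ = ((n:ℝ) ^ (-(1 / 2 - ε)))^2 := by ring
        _ ≤ c := h3
    calc t = (n:ℝ) ^ (1:ℝ) * (n:ℝ) ^ (2 * ε - 1) := by
          rw [htdef, ← Real.rpow_add hn']; ring_nf
      _ = (n:ℝ) * (n:ℝ) ^ (2 * ε - 1) := by rw [Real.rpow_one]
      _ ≤ (n:ℝ) * c := by
          exact mul_le_mul_of_nonneg_left h2 hn'.le
  -- nonempty, K ≥ 1
  have hXne : Nonempty X := by
    by_contra h
    rw [not_nonempty_iff] at h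
    have : c = 0 := by rw [hc, Finset.univ_eq_empty, Finset.sum_empty]
    linarith
  have hK1 : (1:ℝ) ≤ K := by
    rw [hK]; exact_mod_cast Fintype.card_pos
  have hK0 : (0:ℝ) < K := lt_of_lt_of_le one_pos hK1
  -- sum of differences is 0
  have hd0 : ∑ x, (P x - Q x) = 0 := by
    rw [Finset.sum_sub_distrib, hP1, hQ1]; ring
  -- pointwise bound on squared differences
  have hmax : ∀ x : X, K * (P x - Q x)^2 ≤ (K - 1) * c := by
    intro x
    have hxcard : (((Finset.univ.erase x).card : ℕ) : ℝ) = K - 1 := by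
      rw [Finset.card_erase_of_mem (Finset.mem_univ x), Finset.card_univ,
        Nat.cast_sub Fintype.card_pos, Nat.cast_one, hK]
    have hCS := Finset.sum_mul_sq_le_sq_mul_sq (Finset.univ.erase x)
      (fun _ => (1:ℝ)) (fun y => P y - Q y)
    simp only [one_mul, one_pow, Finset.sum_const, nsmul_eq_mul, mul_one] at hCS
    have hsum : ∑ y ∈ Finset.univ.erase x, (P y - Q y) = -(P x - Q x) := by
      have h4 := Finset.add_sum_erase Finset.univ (fun y => P y - Q y) (Finset.mem_univ x)
      linarith [hd0, h4]
    have hsplit : ∑ y ∈ Finset.univ.erase x, (P y - Q y)^2 = c - (P x - Q x)^2 := by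
      have h5 := Finset.add_sum_erase Finset.univ (fun y => (P y - Q y)^2) (Finset.mem_univ x)
      rw [hc]; linarith [h5]
    rw [hsum, hsplit, hxcard] at hCS
    nlinarith [hCS]
  -- second moment bound
  have he2 : (∑ x, P x * (P x - Q x)^2) + (∑ x, Q x * (P x - Q x)^2) ≤ K * c / 2 := by
    have hcomb : (∑ x, P x * (P x - Q x)^2) + (∑ x, Q x * (P x - Q x)^2)
        = ∑ x, (P x + Q x) * (P x - Q x)^2 := by
      rw [← Finset.sum_add_distrib]
      apply Finset.sum_congr rfl
      intro x _; ring
    have hb : ∑ x, (P x + Q x) * (P x - Q x)^2 ≤ ∑ x, (P x + Q x) * ((K - 1) * c / K) := by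
      apply Finset.sum_le_sum
      intro x _
      apply mul_le_mul_of_nonneg_left _ (add_nonneg (hP0 x) (hQ0 x))
      rw [le_div_iff₀ hK0]
      linarith [hmax x]
    have hsum2 : ∑ x, (P x + Q x) * ((K - 1) * c / K) = 2 * ((K - 1) * c / K) := by
      rw [← Finset.sum_mul, Finset.sum_add_distrib, hP1, hQ1]; norm_num
    have hfin : 2 * ((K - 1) * c / K) ≤ K * c / 2 := by
      rw [show 2 * ((K - 1) * c / K) = (2 * ((K - 1) * c)) / K by ring,
        div_le_div_iff₀ hK0 two_pos]
      nlinarith [mul_nonneg hcnn (sq_nonneg (K - 2))]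
    rw [hcomb]
    calc ∑ x, (P x + Q x) * (P x - Q x)^2 ≤ 2 * ((K - 1) * c / K) := by rw [← hsum2]; exact hb
      _ ≤ K * c / 2 := hfin
  -- mean difference identity
  have hμ : (∑ x, P x * (P x - Q x)) - (∑ x, Q x * (P x - Q x)) = c := by
    rw [hc, ← Finset.sum_sub_distrib]
    apply Finset.sum_congr rfl
    intro x _; ring
  set θ : ℝ := (n:ℝ) * ((∑ x, P x * (P x - Q x)) + (∑ x, Q x * (P x - Q x))) / 2 with hθ
  have hnum := sum_sub_mul_lin P Q hP1 hQ1 (fun x => P x - Q x) n θ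
  have hden := sum_add_mul_sq P Q hP1 hQ1 (fun x => P x - Q x) n θ
  rw [hμ] at hnum
  set V : ℝ := ∑ xs : Fin n → X,
      (prodD P n xs - prodD Q n xs)^2 / (prodD P n xs + prodD Q n xs) with hVdef
  set D : ℝ := ∑ xs : Fin n → X,
      (prodD P n xs + prodD Q n xs) * ((∑ i, (P (xs i) - Q (xs i))) - θ)^2 with hDdef
  have hA0 : ∀ xs : Fin n → X, 0 ≤ prodD P n xs :=
    fun xs => Finset.prod_nonneg fun i _ => hP0 _
  have hB0 : ∀ xs : Fin n → X, 0 ≤ prodD Q n xs :=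
    fun xs => Finset.prod_nonneg fun i _ => hQ0 _
  have hV0 : 0 ≤ V := by
    rw [hVdef]
    exact Finset.sum_nonneg fun xs _ =>
      div_nonneg (sq_nonneg _) (add_nonneg (hA0 xs) (hB0 xs))
  -- the bound on the second moment D
  have hDform : D ≤ ((n:ℝ) * c / 2) * (K + (n:ℝ) * c) := by
    rw [hden]
    have hid : (n:ℝ) * ((∑ x, P x * (P x - Q x) ^ 2) + (∑ x, Q x * (P x - Q x) ^ 2))
        + (n:ℝ) * ((n:ℝ) - 1) * ((∑ x, P x * (P x - Q x))^2 + (∑ x, Q x * (P x - Q x))^2)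
        - 2 * θ * ((n:ℝ) * ((∑ x, P x * (P x - Q x)) + (∑ x, Q x * (P x - Q x))))
        + 2 * θ^2
        = (n:ℝ) * ((∑ x, P x * (P x - Q x) ^ 2) + (∑ x, Q x * (P x - Q x) ^ 2))
          - (n:ℝ) * ((∑ x, P x * (P x - Q x))^2 + (∑ x, Q x * (P x - Q x))^2)
          + (n:ℝ)^2 * c^2 / 2 := by
      rw [hθ, ← hμ]; ring
    rw [hid]
    have h6 : 0 ≤ (n:ℝ) * ((∑ x, P x * (P x - Q x))^2 + (∑ x, Q x * (P x - Q x))^2) :=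
      mul_nonneg hn'.le (add_nonneg (sq_nonneg _) (sq_nonneg _))
    have h13 : (n:ℝ) * ((∑ x, P x * (P x - Q x) ^ 2) + (∑ x, Q x * (P x - Q x) ^ 2))
        ≤ (n:ℝ) * (K * c / 2) := mul_le_mul_of_nonneg_left he2 hn'.le
    have h14 : ((n:ℝ) * c / 2) * (K + (n:ℝ) * c)
        = (n:ℝ) * (K * c / 2) + (n:ℝ)^2 * c^2 / 2 := by ring
    rw [h14]
    linarith [h13, h6]
  -- Cauchy-Schwarz
  have hCS2 : ((n:ℝ) * c)^2 ≤ V * D := by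
    have hraw := Finset.sum_mul_sq_le_sq_mul_sq Finset.univ
      (fun xs : Fin n → X =>
        (prodD P n xs - prodD Q n xs) / Real.sqrt (prodD P n xs + prodD Q n xs))
      (fun xs : Fin n → X =>
        Real.sqrt (prodD P n xs + prodD Q n xs) * ((∑ i, (P (xs i) - Q (xs i))) - θ))
    have e1 : ∀ xs : Fin n → X,
        (prodD P n xs - prodD Q n xs) / Real.sqrt (prodD P n xs + prodD Q n xs)
          * (Real.sqrt (prodD P n xs + prodD Q n xs) * ((∑ i, (P (xs i) - Q (xs i))) - θ))
        = (prodD P n xs - prodD Q n xs) * ((∑ i, (P (xs i) - Q (xs i))) - θ) := by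
      intro xs
      rcases eq_or_lt_of_le (add_nonneg (hA0 xs) (hB0 xs)) with hz | hpos
      · have h7 : prodD P n xs = 0 := by linarith [hA0 xs, hB0 xs]
        have h8 : prodD Q n xs = 0 := by linarith [hA0 xs, hB0 xs]
        simp [h7, h8]
      · have h9 : Real.sqrt (prodD P n xs + prodD Q n xs) ≠ 0 :=
          ne_of_gt (Real.sqrt_pos.mpr hpos)
        field_simp
    have e2 : ∀ xs : Fin n → X,
        ((prodD P n xs - prodD Q n xs) / Real.sqrt (prodD P n xs + prodD Q n xs))^2
        = (prodD P n xs - prodD Q n xs)^2 / (prodD P n xs + prodD Q n xs) := by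
      intro xs
      rw [div_pow, Real.sq_sqrt (add_nonneg (hA0 xs) (hB0 xs))]
    have e3 : ∀ xs : Fin n → X,
        (Real.sqrt (prodD P n xs + prodD Q n xs) * ((∑ i, (P (xs i) - Q (xs i))) - θ))^2
        = (prodD P n xs + prodD Q n xs) * ((∑ i, (P (xs i) - Q (xs i))) - θ)^2 := by
      intro xs
      rw [mul_pow, Real.sq_sqrt (add_nonneg (hA0 xs) (hB0 xs))]
    rw [Finset.sum_congr rfl (fun xs _ => e1 xs), Finset.sum_congr rfl (fun xs _ => e2 xs),
      Finset.sum_congr rfl (fun xs _ => e3 xs), hnum, ← hVdef, ← hDdef] at hraw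
    exact hraw
  -- V is below the L1 distance
  have hVS : V ≤ ∑ xs : Fin n → X, |prodD P n xs - prodD Q n xs| := by
    rw [hVdef]
    apply Finset.sum_le_sum
    intro xs _
    rcases eq_or_lt_of_le (add_nonneg (hA0 xs) (hB0 xs)) with hz | hpos
    · rw [← hz, div_zero]
      exact abs_nonneg _
    · rw [div_le_iff₀ hpos]
      have habs : |prodD P n xs - prodD Q n xs| ≤ prodD P n xs + prodD Q n xs :=
        abs_le.mpr ⟨by linarith [hA0 xs, hB0 xs], by linarith [hA0 xs, hB0 xs]⟩
      calc (prodD P n xs - prodD Q n xs)^2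
          = |prodD P n xs - prodD Q n xs| * |prodD P n xs - prodD Q n xs| := by
            rw [← sq_abs]; ring
        _ ≤ |prodD P n xs - prodD Q n xs| * (prodD P n xs + prodD Q n xs) :=
            mul_le_mul_of_nonneg_left habs (abs_nonneg _)
  -- final arithmetic
  have hw : 0 < (n:ℝ) * c := mul_pos hn' hc0
  have hKw : 0 < K + (n:ℝ) * c := by linarith
  have hVlow : 2 * ((n:ℝ) * c / (K + (n:ℝ) * c)) ≤ V := by
    rw [show 2 * ((n:ℝ) * c / (K + (n:ℝ) * c)) = (2 * ((n:ℝ) * c)) / (K + (n:ℝ) * c) by ring,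
      div_le_iff₀ hKw]
    have h11 : ((n:ℝ) * c)^2 ≤ V * (((n:ℝ) * c / 2) * (K + (n:ℝ) * c)) :=
      le_trans hCS2 (mul_le_mul_of_nonneg_left hDform hV0)
    nlinarith [h11, hw]
  set S : ℝ := ∑ xs : Fin n → X, |prodD P n xs - prodD Q n xs| with hSdef
  have hS2 : 2 * ((n:ℝ) * c / (K + (n:ℝ) * c)) ≤ S := le_trans hVlow hVS
  have hre : K / (K + (n:ℝ) * c) = 1 - (n:ℝ) * c / (K + (n:ℝ) * c) := by
    field_simp
    ring
  have hgoal1 : (1:ℝ) / 2 * (1 - 1 / 2 * S) ≤ 1 / 2 * (K / (K + (n:ℝ) * c)) := by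
    rw [hre]; linarith [hS2]
  have hgoal2 : 1 / 2 * (K / (K + (n:ℝ) * c)) ≤ K / (2 * K + 2 * t) := by
    have h16 : (1:ℝ) / 2 * (K / (K + (n:ℝ) * c)) = K / (2 * (K + (n:ℝ) * c)) := by
      rw [eq_div_iff (by positivity)]
      field_simp
    rw [h16, div_le_div_iff₀ (by linarith) (by linarith)]
    nlinarith [mul_le_mul_of_nonneg_left htw hK0.le]
  linarith [hgoal1, hgoal2]
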